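/- Let X be a metric space which is the union X = ⋃_{i ∈ I} X_i of subsets X_i that are pairwise r-separated, i.e. dist(X_i, X_j) ≥ r for all i ≠ j. Let c > 0, s > 0 and n ∈ ℕ, and suppose dim_N(X_i,c,s) ≤ n for every i ∈ I. Then dim_N(X, min{c, r/s}, s) ≤ n. -/
import Mathlib


open Metric Set

/-- The set `A` in a space with distance function `d` has Nagata dimension at most `n`
with constant `c` at scale `s` (written `dim_N(A,c,s) ≤ n` in the paper): there is a
cover `𝒰 = ⋃_{k=0}^n 𝒰 k` of `A` by subsets of `A`, each member having diameter at
most `s`, such that each family `𝒰 k` is `c*s`-separated. -/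
def dimNle {X : Type*} (d : X → X → ℝ) (A : Set X) (c s : ℝ) (n : ℕ) : Prop :=
  ∃ 𝒰 : Fin (n + 1) → Set (Set X),
    (∀ k, ∀ U ∈ 𝒰 k, U ⊆ A) ∧
    (∀ p ∈ A, ∃ k, ∃ U ∈ 𝒰 k, p ∈ U) ∧
    (∀ k, ∀ U ∈ 𝒰 k, ∀ a ∈ U, ∀ b ∈ U, d a b ≤ s) ∧
    (∀ k, ∀ U ∈ 𝒰 k, ∀ V ∈ 𝒰 k, U ≠ V → ∀ a ∈ U, ∀ b ∈ V, c * s ≤ d a b)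

/-- `dimAle d A C Rbar β` (written `dim_A(A,C,Rbar) ≤ β` in the paper): for all
`0 < r < R < Rbar` and every `x ∈ A`, the ball of radius `R` around `x` in `A` can be
covered by at most `C * (R/r)^β` balls of radius `r` with centers in `A`. -/
def dimAle {X : Type*} (d : X → X → ℝ) (A : Set X) (C Rbar β : ℝ) : Prop :=
  ∀ r R : ℝ, 0 < r → r < R → R < Rbar → ∀ x ∈ A,
    ∃ T : Finset X, ↑T ⊆ A ∧ (T.card : ℝ) ≤ C * (R / r) ^ β ∧
      ∀ z ∈ A, d z x < R → ∃ t ∈ T, d z t < r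

/-- `d` is a metric distance function on `Y`: symmetric, triangle inequality, and
vanishing exactly on the diagonal. -/
def IsMetricDist {Y : Type*} (d : Y → Y → ℝ) : Prop :=
  (∀ a b, d a b = d b a) ∧ (∀ a b c, d a c ≤ d a b + d b c) ∧ (∀ a b, d a b = 0 ↔ a = b)

/-- An `ε`-coupling between the pointed spaces `(A, dA, a₀)` and `(B, dB, b₀)`:
a pseudometric on the disjoint union extending `dA` and `dB`, with `d(a₀,b₀) ≤ ε`,
every point of `B_A(a₀,1/ε)` within distance `< ε` of a point of `B`, and every point
of `B_B(b₀,1/ε)` within distance `< ε` of a point of `A`. -/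
def IsCoupling {A B : Type*} (dA : A → A → ℝ) (dB : B → B → ℝ) (a₀ : A) (b₀ : B)
    (ε : ℝ) (d : A ⊕ B → A ⊕ B → ℝ) : Prop :=
  (∀ p q, d p q = d q p) ∧
  (∀ p, d p p = 0) ∧
  (∀ p q r, d p r ≤ d p q + d q r) ∧
  (∀ u v : A, d (Sum.inl u) (Sum.inl v) = dA u v) ∧
  (∀ u v : B, d (Sum.inr u) (Sum.inr v) = dB u v) ∧
  d (Sum.inl a₀) (Sum.inr b₀) ≤ ε ∧
  (∀ u : A, dA u a₀ < 1 / ε → ∃ v : B, d (Sum.inl u) (Sum.inr v) < ε) ∧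
  (∀ v : B, dB v b₀ < 1 / ε → ∃ u : A, d (Sum.inl u) (Sum.inr v) < ε)

/-- If `X = ⋃ᵢ Xᵢ` with the `Xᵢ` pairwise `r`-separated and
`dim_N(Xᵢ,c,s) ≤ n` for every `i`, then `dim_N(X, min{c, r/s}, s) ≤ n`. -/
theorem nagata_separated_union {X : Type*} [MetricSpace X] {I : Type*} (Xi : I → Set X)
    (r c s : ℝ) (n : ℕ) (hr : 0 < r) (hc : 0 < c) (hs : 0 < s)
    (hcover : ⋃ i, Xi i = Set.univ)
    (hsep : ∀ i j, i ≠ j → ∀ a ∈ Xi i, ∀ b ∈ Xi j, r ≤ dist a b)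
    (hdim : ∀ i, dimNle (fun a b : X => dist a b) (Xi i) c s n) :
    dimNle (fun a b : X => dist a b) Set.univ (min c (r / s)) s n := by
  choose 𝒱 hsub hcov hdiam hsepi using hdim
  refine ⟨fun k => ⋃ i, 𝒱 i k, ?_, ?_, ?_, ?_⟩
  · intro k U hU
    exact fun x _ => Set.mem_univ x
  · intro p _
    have : p ∈ ⋃ i, Xi i := hcover ▸ Set.mem_univ p
    obtain ⟨i, hi⟩ := Set.mem_iUnion.mp this
    obtain ⟨k, U, hU, hpU⟩ := hcov i p hi
    exact ⟨k, U, Set.mem_iUnion.mpr ⟨i, hU⟩, hpU⟩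
  · intro k U hU a ha b hb
    obtain ⟨i, hUi⟩ := Set.mem_iUnion.mp hU
    exact hdiam i k U hUi a ha b hb
  · intro k U hU V hV hne a ha b hb
    obtain ⟨i, hUi⟩ := Set.mem_iUnion.mp hU
    obtain ⟨j, hVj⟩ := Set.mem_iUnion.mp hV
    rcases eq_or_ne i j with rfl | hij
    · calc min c (r / s) * s ≤ c * s :=
            mul_le_mul_of_nonneg_right (min_le_left _ _) hs.le
        _ ≤ dist a b := hsepi i k U hUi V hVj hne a ha b hb
    · calc min c (r / s) * s ≤ (r / s) * s :=
            mul_le_mul_of_nonneg_right (min_le_right _ _) hs.le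
        _ = r := div_mul_cancel₀ r hs.ne'
        _ ≤ dist a b := hsep i j hij a (hsub i k U hUi ha) b (hsub j k V hVj hb)
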